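/- Let n ≥ q ≥ 1 be integers, let v ∈ ℝⁿ have all entries positive, let X ∈ F_v, let X⊥ be an n×(n−q) real matrix such that (X X⊥) is orthogonal, and set α̂ = Xᵀv/‖Xᵀv‖₂ (which is well defined since Xᵀv ≠ 0). For Z ∈ ℝ^{n×q} define P_N(Z) = X·(XᵀZ + ZᵀX)/2 + (I_n − XXᵀ) Z α̂ α̂ᵀ. Then P_N(Z) ∈ N_X, Z − P_N(Z) = X·(XᵀZ − ZᵀX)/2 + (I_n − XXᵀ) Z (I_q − α̂ α̂ᵀ) ∈ T_X, and consequently P_N(Z) is the orthogonal projection of Z onto the subspace N_X with respect to the Frobenius inner product. -/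

import Mathlib

open Matrix

set_option linter.unusedSectionVars false

section Helpers
variable {l m n : Type*} [Fintype l] [Fintype m] [Fintype n]

lemma aux_mul_vecMulVec (M : Matrix l m ℝ) (w : m → ℝ) (u : n → ℝ) :
    M * vecMulVec w u = vecMulVec (M *ᵥ w) u := by
  ext i j
  simp [vecMulVec_apply, mul_apply, mulVec, dotProduct, Finset.sum_mul, mul_assoc]

lemma aux_vecMulVec_smul_left (c : ℝ) (w : m → ℝ) (u : n → ℝ) :
    vecMulVec (c • w) u = c • vecMulVec w u := by
  ext i j; simp [vecMulVec_apply, mul_assoc]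

lemma aux_vecMulVec_smul_right (c : ℝ) (w : m → ℝ) (u : n → ℝ) :
    vecMulVec w (c • u) = c • vecMulVec w u := by
  ext i j; simp [vecMulVec_apply]; ring

lemma aux_vecMulVec_mulVec (w : m → ℝ) (u : n → ℝ) (x : n → ℝ) :
    vecMulVec w u *ᵥ x = (u ⬝ᵥ x) • w := by
  ext i
  simp only [vecMulVec_apply, mulVec, dotProduct, Pi.smul_apply, smul_eq_mul, Finset.sum_mul]
  exact Finset.sum_congr rfl fun k _ => by ring

lemma aux_vecMulVec_zero (u : n → ℝ) : vecMulVec (0 : m → ℝ) u = 0 := by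
  ext i j; simp [vecMulVec_apply]

lemma aux_trace_vecMulVec (w u : m → ℝ) : trace (vecMulVec w u) = w ⬝ᵥ u := by
  simp [trace, vecMulVec_apply, dotProduct, diag]

end Helpers

/-- With `α̂ = Xᵀv / ‖Xᵀv‖₂` and
`P_N(Z) = X (XᵀZ + ZᵀX)/2 + (I − XXᵀ) Z α̂ α̂ᵀ`, one has `P_N(Z) ∈ N_X`,
`Z − P_N(Z) = X (XᵀZ − ZᵀX)/2 + (I − XXᵀ) Z (I − α̂ α̂ᵀ) ∈ T_X`, and `Z − P_N(Z)` is
Frobenius-orthogonal to `N_X`, so `P_N(Z)` is the orthogonal projection of `Z` onto `N_X`. -/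
theorem stmt_8 (n q : ℕ) (hq : 1 ≤ q) (hnq : q ≤ n)
    (v : Fin n → ℝ) (hv : ∀ i, 0 < v i)
    (X : Matrix (Fin n) (Fin q) ℝ)
    (hX : Xᵀ * X = 1 ∧ ∃ c : Fin q → ℝ, X *ᵥ c = v)
    (Xp : Matrix (Fin n) (Fin (n - q)) ℝ)
    (hO : (fromCols X Xp)ᵀ * fromCols X Xp = 1)
    (ah : Fin q → ℝ)
    (hah : ah = fun j => (Xᵀ *ᵥ v) j / Real.sqrt (∑ k, ((Xᵀ *ᵥ v) k) ^ 2))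
    (Z P : Matrix (Fin n) (Fin q) ℝ)
    (hP : P = (1 / 2 : ℝ) • (X * (Xᵀ * Z + Zᵀ * X)) +
      (1 - X * Xᵀ) * Z * vecMulVec ah ah) :
    (∃ (S : Matrix (Fin q) (Fin q) ℝ) (u : Fin (n - q) → ℝ),
      Sᵀ = S ∧ P = X * S + vecMulVec (Xp *ᵥ u) (v ᵥ* X)) ∧
    Z - P = (1 / 2 : ℝ) • (X * (Xᵀ * Z - Zᵀ * X)) +
      (1 - X * Xᵀ) * Z * (1 - vecMulVec ah ah) ∧
    (∃ (Ω : Matrix (Fin q) (Fin q) ℝ) (K : Matrix (Fin (n - q)) (Fin q) ℝ),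
      Ωᵀ = -Ω ∧ K *ᵥ (Xᵀ *ᵥ v) = 0 ∧ Z - P = X * Ω + Xp * K) ∧
    (∀ W : Matrix (Fin n) (Fin q) ℝ,
      (∃ (S : Matrix (Fin q) (Fin q) ℝ) (u : Fin (n - q) → ℝ),
        Sᵀ = S ∧ W = X * S + vecMulVec (Xp *ᵥ u) (v ᵥ* X)) →
      Matrix.trace ((Z - P)ᵀ * W) = 0) := by
  obtain ⟨h1, c, hc⟩ := hX
  -- block facts
  rw [transpose_fromCols, fromRows_mul_fromCols] at hO
  have hO' : fromBlocks (Xᵀ * X) (Xᵀ * Xp) (Xpᵀ * X) (Xpᵀ * Xp) =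
      fromBlocks (1 : Matrix (Fin q) (Fin q) ℝ) 0 0 (1 : Matrix (Fin (n-q)) (Fin (n-q)) ℝ) := by
    rw [hO, fromBlocks_one]
  have h12 : Xᵀ * Xp = 0 := by
    have := congrArg Matrix.toBlocks₁₂ hO'
    simpa [Matrix.toBlocks_fromBlocks₁₂, -Matrix.fromBlocks_one] using this
  have h21 : Xpᵀ * X = 0 := by
    have := congrArg Matrix.toBlocks₂₁ hO'
    simpa [Matrix.toBlocks_fromBlocks₂₁, -Matrix.fromBlocks_one] using this
  have h22 : Xpᵀ * Xp = 1 := by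
    have := congrArg Matrix.toBlocks₂₂ hO'
    simpa [Matrix.toBlocks_fromBlocks₂₂, -Matrix.fromBlocks_one] using this
  have e : Fin n ≃ Fin q ⊕ Fin (n - q) :=
    (finCongr (Nat.add_sub_cancel' hnq).symm).trans finSumFinEquiv.symm
  have hfull : X * Xᵀ + Xp * Xpᵀ = 1 := by
    have h := (fromCols_mul_fromRows_eq_one_comm e X Xp Xᵀ Xpᵀ).mpr
      (by rw [fromRows_mul_fromCols]; exact hO)
    rwa [fromCols_mul_fromRows] at h
  have hpp : Xp * Xpᵀ = 1 - X * Xᵀ := eq_sub_of_add_eq' hfull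
  -- the vector a and its norm
  set a : Fin q → ℝ := Xᵀ *ᵥ v with hadef
  have hva : v ᵥ* X = a := by rw [hadef, mulVec_transpose]
  have hac : a = c := by
    rw [hadef, ← hc, mulVec_mulVec, h1, one_mulVec]
  have hane : a ≠ 0 := by
    intro h0
    have hv0 : v = 0 := by rw [← hc, ← hac, h0, mulVec_zero]
    exact absurd (hv ⟨0, lt_of_lt_of_le hq hnq⟩) (by rw [hv0]; simp)
  set r : ℝ := Real.sqrt (∑ k, (a k) ^ 2) with hrdef
  have hsumpos : 0 < ∑ k, (a k) ^ 2 := by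
    obtain ⟨k0, hk0⟩ := Function.ne_iff.mp hane
    exact Finset.sum_pos' (fun k _ => sq_nonneg _)
      ⟨k0, Finset.mem_univ _, lt_of_le_of_ne (sq_nonneg _) (Ne.symm (pow_ne_zero 2 hk0))⟩
  have hr : 0 < r := Real.sqrt_pos.mpr hsumpos
  have hr2 : r ^ 2 = ∑ k, (a k) ^ 2 := Real.sq_sqrt hsumpos.le
  have hah' : ah = r⁻¹ • a := by
    rw [hah]
    funext j
    show a j / r = r⁻¹ * a j
    rw [div_eq_inv_mul]
  have haa : a ⬝ᵥ a = r ^ 2 := by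
    rw [hr2]; simp [dotProduct, sq]
  have hAa : vecMulVec ah ah *ᵥ a = a := by
    rw [hah', aux_vecMulVec_smul_left, smul_mulVec, aux_vecMulVec_mulVec,
      smul_dotProduct, haa, smul_eq_mul, smul_smul]
    rw [show r⁻¹ * (r⁻¹ * r ^ 2) = 1 by rw [sq]; field_simp, one_smul]
  -- part 2
  have h2 : Z - P = (1 / 2 : ℝ) • (X * (Xᵀ * Z - Zᵀ * X)) +
      (1 - X * Xᵀ) * Z * (1 - vecMulVec ah ah) := by
    rw [hP]
    simp only [Matrix.mul_add, Matrix.mul_sub, Matrix.add_mul, Matrix.sub_mul, Matrix.one_mul, Matrix.mul_one, Matrix.mul_assoc,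
      smul_add, smul_sub]
    module
  -- part 1
  set S : Matrix (Fin q) (Fin q) ℝ := (1 / 2 : ℝ) • (Xᵀ * Z + Zᵀ * X) with hSdef
  have hS : Sᵀ = S := by
    rw [hSdef, transpose_smul, transpose_add, transpose_mul, transpose_mul,
      transpose_transpose, transpose_transpose, add_comm]
  set u0 : Fin (n - q) → ℝ := r⁻¹ • ((Xpᵀ * Z) *ᵥ ah) with hu0def
  have hP1 : P = X * S + vecMulVec (Xp *ᵥ u0) (v ᵥ* X) := by
    rw [hva, hP, hSdef, hu0def]
    congr 1
    · rw [Matrix.mul_smul]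
    · rw [mulVec_smul, mulVec_mulVec, ← Matrix.mul_assoc, hpp,
        aux_vecMulVec_smul_left, aux_mul_vecMulVec, hah', aux_vecMulVec_smul_right]
  -- part 3
  set Ω : Matrix (Fin q) (Fin q) ℝ := (1 / 2 : ℝ) • (Xᵀ * Z - Zᵀ * X) with hΩdef
  have hΩ : Ωᵀ = -Ω := by
    rw [hΩdef, transpose_smul, transpose_sub, transpose_mul, transpose_mul,
      transpose_transpose, transpose_transpose, ← smul_neg, neg_sub]
  set K : Matrix (Fin (n - q)) (Fin q) ℝ := Xpᵀ * Z * (1 - vecMulVec ah ah) with hKdef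
  have hKa : K *ᵥ a = 0 := by
    rw [hKdef, ← mulVec_mulVec, sub_mulVec, one_mulVec, hAa, sub_self, mulVec_zero]
  have h3 : Z - P = X * Ω + Xp * K := by
    rw [h2, hKdef, hΩdef, Matrix.mul_smul, ← Matrix.mul_assoc, ← Matrix.mul_assoc, hpp]
  refine ⟨⟨S, u0, hS, hP1⟩, h2, ⟨Ω, K, hΩ, hKa, h3⟩, ?_⟩
  -- part 4
  rintro W ⟨S', u, hS', hW⟩
  rw [h3, hW, hva]
  rw [transpose_add, transpose_mul, transpose_mul, Matrix.add_mul, Matrix.mul_add,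
    Matrix.mul_add]
  have t1 : Ωᵀ * Xᵀ * (X * S') = Ωᵀ * S' := by
    rw [Matrix.mul_assoc, ← Matrix.mul_assoc Xᵀ, h1, Matrix.one_mul]
  have t2 : Ωᵀ * Xᵀ * vecMulVec (Xp *ᵥ u) a = 0 := by
    rw [Matrix.mul_assoc, aux_mul_vecMulVec, mulVec_mulVec, h12, zero_mulVec,
      aux_vecMulVec_zero, Matrix.mul_zero]
  have t3 : Kᵀ * Xpᵀ * (X * S') = 0 := by
    rw [Matrix.mul_assoc, ← Matrix.mul_assoc Xpᵀ, h21, Matrix.zero_mul, Matrix.mul_zero]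
  have t4 : Kᵀ * Xpᵀ * vecMulVec (Xp *ᵥ u) a = vecMulVec (Kᵀ *ᵥ u) a := by
    rw [Matrix.mul_assoc, aux_mul_vecMulVec, mulVec_mulVec, h22, one_mulVec,
      aux_mul_vecMulVec]
  rw [t1, t2, t3, t4]
  have htr1 : trace (Ωᵀ * S') = 0 := by
    have e1 : trace (Ωᵀ * S') = trace (Ω * S') := by
      conv_lhs => rw [← trace_transpose]
      rw [transpose_mul, transpose_transpose, hS', trace_mul_comm]
    have e2 : trace (Ωᵀ * S') = - trace (Ω * S') := by
      rw [hΩ, neg_mul, trace_neg]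
    linarith
  have htr2 : trace (vecMulVec (Kᵀ *ᵥ u) a) = 0 := by
    rw [aux_trace_vecMulVec, mulVec_transpose, ← dotProduct_mulVec, hKa, dotProduct_zero]
  rw [trace_add, trace_add, trace_add, htr1, htr2, trace_zero]
  simp
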